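/- Let ℓ be an odd prime, d a unit of ℤ/ℓ²ℤ, and t ∈ ℤ/ℓ²ℤ. Then the number of nonzero elements a ∈ ℤ/ℓ²ℤ such that a² − at + d is a unit of ℤ/ℓ²ℤ equals: ℓ² − ℓ − 1 if t² − 4d = 0; ℓ² − ℓ − 1 if t² − 4d ≠ 0 and ℓ divides t² − 4d; ℓ² − 2ℓ − 1 if t² − 4d is a quadratic residue; and ℓ² − 1 if t² − 4d is a quadratic non-residue. -/

import Mathlib

set_option linter.unusedSectionVars false

open Finset

section aux

variable {ℓ : ℕ} [hp : Fact ℓ.Prime]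

private noncomputable def phi (ℓ : ℕ) : ZMod (ℓ ^ 2) →+* ZMod ℓ :=
  ZMod.castHom (dvd_pow_self ℓ two_ne_zero) (ZMod ℓ)

private lemma neZero_sq : NeZero (ℓ ^ 2) := ⟨pow_ne_zero 2 hp.out.ne_zero⟩

private lemma phi_apply (x : ZMod (ℓ ^ 2)) : phi ℓ x = (x.val : ZMod ℓ) := by
  haveI := @neZero_sq ℓ hp
  simp [phi, ZMod.natCast_val]

private lemma isUnit_iff_phi (x : ZMod (ℓ ^ 2)) : IsUnit x ↔ phi ℓ x ≠ 0 := by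
  haveI := @neZero_sq ℓ hp
  rw [phi_apply, Ne, ZMod.natCast_eq_zero_iff]
  conv_lhs => rw [← ZMod.natCast_zmod_val x]
  rw [ZMod.isUnit_iff_coprime, Nat.coprime_pow_right_iff (by norm_num),
    Nat.coprime_comm, hp.out.coprime_iff_not_dvd]

private lemma phi_eq_zero_iff (x : ZMod (ℓ ^ 2)) : phi ℓ x = 0 ↔ ∃ y, x = ℓ * y := by
  haveI := @neZero_sq ℓ hp
  constructor
  · intro h
    rw [phi_apply, ZMod.natCast_eq_zero_iff] at h
    obtain ⟨k, hk⟩ := h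
    exact ⟨(k : ZMod (ℓ ^ 2)), by rw [← Nat.cast_mul, ← hk, ZMod.natCast_zmod_val]⟩
  · rintro ⟨y, rfl⟩
    rw [map_mul, map_natCast, ZMod.natCast_self, zero_mul]

private lemma ll_eq_zero : (ℓ : ZMod (ℓ ^ 2)) * ℓ = 0 := by
  have : ((ℓ * ℓ : ℕ) : ZMod (ℓ ^ 2)) = 0 := by
    rw [ZMod.natCast_eq_zero_iff]; exact ⟨1, by ring⟩
  push_cast at this; exact this

private lemma phi_surj : Function.Surjective (phi ℓ) := by
  haveI := @neZero_sq ℓ hp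
  intro b
  refine ⟨(b.val : ZMod (ℓ ^ 2)), ?_⟩
  have : phi ℓ ((b.val : ℕ) : ZMod (ℓ ^ 2)) = ((b.val : ℕ) : ZMod ℓ) := map_natCast _ _
  rw [this, ZMod.natCast_zmod_val]


private lemma fiber_card (b : ZMod ℓ) :
    #(univ.filter fun a : ZMod (ℓ ^ 2) => phi ℓ a = b) = ℓ := by
  haveI := @neZero_sq ℓ hp
  -- all fibers have the same cardinality
  have hsame : ∀ b : ZMod ℓ, #(univ.filter fun a : ZMod (ℓ ^ 2) => phi ℓ a = b)
      = #(univ.filter fun a : ZMod (ℓ ^ 2) => phi ℓ a = 0) := by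
    intro b
    obtain ⟨a₀, ha₀⟩ := phi_surj (ℓ := ℓ) b
    apply Finset.card_bij (fun a _ => a - a₀)
    · intro a ha
      simp only [mem_filter, mem_univ, true_and] at ha ⊢
      rw [map_sub, ha, ha₀, sub_self]
    · intro a ha a' ha' h
      exact sub_left_injective h
    · intro c hc
      simp only [mem_filter, mem_univ, true_and] at hc ⊢
      exact ⟨c + a₀, by rw [map_add, hc, ha₀, zero_add], by ring⟩
  have hsum : ∑ b : ZMod ℓ, #(univ.filter fun a : ZMod (ℓ ^ 2) => phi ℓ a = b)
      = Fintype.card (ZMod (ℓ ^ 2)) := by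
    rw [← Finset.card_univ]
    exact (Finset.card_eq_sum_card_fiberwise (fun a _ => mem_univ (phi ℓ a))).symm
  simp only [hsame] at hsum
  rw [Finset.sum_const, Finset.card_univ, ZMod.card, ZMod.card, smul_eq_mul] at hsum
  have h0 : #(univ.filter fun a : ZMod (ℓ ^ 2) => phi ℓ a = 0) = ℓ :=
    Nat.eq_of_mul_eq_mul_left hp.out.pos (hsum.trans (pow_two ℓ))
  rw [hsame b, h0]

private lemma count_main (d : (ZMod (ℓ ^ 2))ˣ) (t : ZMod (ℓ ^ 2)) :
    Nat.card {a : ZMod (ℓ ^ 2) // a ≠ 0 ∧ IsUnit (a ^ 2 - a * t + (d : ZMod (ℓ ^ 2)))}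
      = ℓ ^ 2 - 1 - ℓ * #(univ.filter fun x : ZMod ℓ =>
          x ^ 2 - x * phi ℓ t + phi ℓ (d : ZMod (ℓ ^ 2)) = 0) := by
  haveI := @neZero_sq ℓ hp
  set g : ZMod ℓ → ZMod ℓ := fun x => x ^ 2 - x * phi ℓ t + phi ℓ (d : ZMod (ℓ ^ 2)) with hg
  have hphi : ∀ a : ZMod (ℓ ^ 2),
      phi ℓ (a ^ 2 - a * t + (d : ZMod (ℓ ^ 2))) = g (phi ℓ a) := by
    intro a; simp [hg, map_add, map_sub, map_mul, map_pow]
  have hiff : ∀ a : ZMod (ℓ ^ 2),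
      (a ≠ 0 ∧ IsUnit (a ^ 2 - a * t + (d : ZMod (ℓ ^ 2)))) ↔ (a ≠ 0 ∧ g (phi ℓ a) ≠ 0) := by
    intro a; rw [isUnit_iff_phi, hphi]
  rw [Nat.card_congr (Equiv.subtypeEquivRight hiff), Nat.card_eq_fintype_card,
    Fintype.card_subtype]
  -- roots of g are nonzero
  have hdbar : phi ℓ (d : ZMod (ℓ ^ 2)) ≠ 0 := (isUnit_iff_phi _).mp d.isUnit
  have hroot0 : ∀ x : ZMod ℓ, g x = 0 → x ≠ 0 := by
    intro x hx h0
    rw [hg] at hx; rw [h0] at hx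
    simp at hx
    exact hdbar hx
  set S : Finset (ZMod ℓ) := univ.filter fun x : ZMod ℓ => g x = 0 with hS
  set B : Finset (ZMod (ℓ ^ 2)) := univ.filter fun a => g (phi ℓ a) = 0 with hB
  have hBsub : B ⊆ univ.filter fun a : ZMod (ℓ ^ 2) => a ≠ 0 := by
    intro a ha
    simp only [hB, mem_filter, mem_univ, true_and] at ha ⊢
    intro h0
    exact hroot0 _ ha (by rw [h0, map_zero])
  have hsplit : (univ.filter fun a : ZMod (ℓ ^ 2) => a ≠ 0 ∧ g (phi ℓ a) ≠ 0)
      = (univ.filter fun a : ZMod (ℓ ^ 2) => a ≠ 0) \ B := by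
    ext a
    simp only [hB, mem_filter, mem_univ, true_and, mem_sdiff]
  have hBcard : B.card = ℓ * S.card := by
    have : B.card = ∑ b ∈ S, #(B.filter fun a => phi ℓ a = b) := by
      apply Finset.card_eq_sum_card_fiberwise
      intro a ha
      simp only [hB, coe_filter, Set.mem_setOf_eq, mem_filter, mem_univ, true_and] at ha
      simp only [hS, coe_filter, Set.mem_setOf_eq, mem_filter, mem_univ, true_and]
      exact ha
    rw [this]
    have hfib : ∀ b ∈ S, #(B.filter fun a => phi ℓ a = b)
        = #(univ.filter fun a : ZMod (ℓ ^ 2) => phi ℓ a = b) := by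
      intro b hb
      congr 1
      ext a
      simp only [hB, mem_filter, mem_univ, true_and, hS] at hb ⊢
      constructor
      · rintro ⟨_, h⟩; exact h
      · intro h; exact ⟨by rw [h]; exact hb, h⟩
    rw [Finset.sum_congr rfl hfib]
    simp [fiber_card, mul_comm]
  rw [hsplit, Finset.card_sdiff_of_subset hBsub, hBcard]
  congr 1
  rw [Finset.filter_ne', Finset.card_erase_of_mem (mem_univ _), Finset.card_univ, ZMod.card]


private lemma zmod2_ne_zero (hodd : ℓ ≠ 2) : (2 : ZMod ℓ) ≠ 0 := by
  intro h
  have : ((2 : ℕ) : ZMod ℓ) = 0 := by exact_mod_cast h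
  rw [ZMod.natCast_eq_zero_iff] at this
  exact hodd ((Nat.prime_dvd_prime_iff_eq hp.out Nat.prime_two).mp this)

private lemma roots_card_eq_sqrts (hodd : ℓ ≠ 2) (tb db : ZMod ℓ) :
    #(univ.filter fun x : ZMod ℓ => x ^ 2 - x * tb + db = 0)
      = #(univ.filter fun y : ZMod ℓ => y ^ 2 = tb ^ 2 - 4 * db) := by
  have h2 : (2 : ZMod ℓ) ≠ 0 := zmod2_ne_zero hodd
  have h4 : (4 : ZMod ℓ) ≠ 0 := by
    intro h
    apply h2
    have h22 : (2 : ZMod ℓ) * 2 = 0 := by rw [← h]; norm_num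
    rcases mul_eq_zero.mp h22 with h | h <;> exact h
  apply Finset.card_bij (fun x _ => 2 * x - tb)
  · intro x hx
    simp only [mem_filter, mem_univ, true_and] at hx ⊢
    have key : (2 * x - tb) ^ 2 - (tb ^ 2 - 4 * db) = 4 * (x ^ 2 - x * tb + db) := by ring
    have : (2 * x - tb) ^ 2 - (tb ^ 2 - 4 * db) = 0 := by rw [key, hx, mul_zero]
    exact sub_eq_zero.mp this
  · intro x hx x' hx' h
    exact mul_left_cancel₀ h2 (sub_left_injective h)
  · intro y hy
    simp only [mem_filter, mem_univ, true_and] at hy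
    refine ⟨(y + tb) / 2, ?_, ?_⟩
    · simp only [mem_filter, mem_univ, true_and]
      have h1 : 2 * ((y + tb) / 2) - tb = y := by field_simp; ring
      have key : (2 * ((y + tb) / 2) - tb) ^ 2 - (tb ^ 2 - 4 * db)
          = 4 * (((y + tb) / 2) ^ 2 - ((y + tb) / 2) * tb + db) := by ring
      rw [h1, hy, sub_self] at key
      exact (mul_eq_zero.mp key.symm).resolve_left h4
    · field_simp; ring
private lemma sqrts_zero : #(univ.filter fun y : ZMod ℓ => y ^ 2 = (0 : ZMod ℓ)) = 1 := by
  have : (univ.filter fun y : ZMod ℓ => y ^ 2 = (0 : ZMod ℓ)) = {0} := by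
    ext y
    simp [pow_eq_zero_iff]
  rw [this, Finset.card_singleton]

private lemma sqrts_sq (hodd : ℓ ≠ 2) (s : ZMod ℓ) (hs : s ≠ 0) :
    #(univ.filter fun y : ZMod ℓ => y ^ 2 = s ^ 2) = 2 := by
  have h2 : (2 : ZMod ℓ) ≠ 0 := zmod2_ne_zero hodd
  have hsne : s ≠ -s := by
    intro h
    have : (2 : ZMod ℓ) * s = 0 := by linear_combination h
    rcases mul_eq_zero.mp this with h' | h'
    · exact h2 h'
    · exact hs h'
  have : (univ.filter fun y : ZMod ℓ => y ^ 2 = s ^ 2) = {s, -s} := by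
    ext y
    simp only [mem_filter, mem_univ, true_and, mem_insert, mem_singleton]
    constructor
    · intro h
      have : (y - s) * (y + s) = 0 := by linear_combination h
      rcases mul_eq_zero.mp this with h' | h'
      · exact Or.inl (sub_eq_zero.mp h')
      · exact Or.inr (eq_neg_of_add_eq_zero_left h')
    · rintro (rfl | rfl)
      · rfl
      · ring
  rw [this, Finset.card_insert_of_notMem (by simpa using hsne), Finset.card_singleton]

private lemma hensel (hodd : ℓ ≠ 2) (D : ZMod (ℓ ^ 2)) (y : ZMod ℓ) (hy : y ≠ 0)
    (h : y ^ 2 = phi ℓ D) : ∃ u : (ZMod (ℓ ^ 2))ˣ, D = (u : ZMod (ℓ ^ 2)) ^ 2 := by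
  haveI := @neZero_sq ℓ hp
  obtain ⟨s, hs⟩ := phi_surj (ℓ := ℓ) y
  have hker : phi ℓ (s ^ 2 - D) = 0 := by
    rw [map_sub, map_pow, hs, ← h, sub_self]
  obtain ⟨c, hc⟩ := (phi_eq_zero_iff _).mp hker
  have h2s : IsUnit (2 * s) := by
    rw [isUnit_iff_phi, map_mul]
    have : phi ℓ (2 : ZMod (ℓ ^ 2)) = 2 := by
      have := map_natCast (phi ℓ) 2
      simpa using this
    rw [this, hs]
    exact mul_ne_zero (zmod2_ne_zero hodd) hy
  set v : ZMod (ℓ ^ 2) := ((h2s.unit⁻¹ : (ZMod (ℓ ^ 2))ˣ) : ZMod (ℓ ^ 2)) with hv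
  have hvv : (2 * s) * v = 1 := by
    have := h2s.unit.mul_inv
    rwa [h2s.unit_spec] at this
  have hsq : (s - ℓ * c * v) ^ 2 = D := by
    have hℓℓ : (ℓ : ZMod (ℓ ^ 2)) * ℓ = 0 := ll_eq_zero
    have hsd : s ^ 2 - D = ℓ * c := hc
    linear_combination hsd - (ℓ : ZMod (ℓ ^ 2)) * c * hvv + c ^ 2 * v ^ 2 * hℓℓ
  have hDunit : IsUnit D := by
    rw [isUnit_iff_phi, ← h]
    exact pow_ne_zero 2 hy
  have huu : IsUnit (s - ℓ * c * v) := by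
    have h' : IsUnit ((s - ℓ * c * v) * (s - ℓ * c * v)) := by
      rw [← pow_two, hsq]; exact hDunit
    exact isUnit_of_mul_isUnit_left h'
  exact ⟨huu.unit, by rw [huu.unit_spec, hsq]⟩

end aux

/-- For an odd prime ℓ, a unit d of ℤ/ℓ²ℤ and t ∈ ℤ/ℓ²ℤ, the number of nonzero
a ∈ ℤ/ℓ²ℤ with a² − at + d a unit is: ℓ² − ℓ − 1 if t² − 4d = 0; ℓ² − ℓ − 1 if
t² − 4d ≠ 0 and ℓ ∣ t² − 4d; ℓ² − 2ℓ − 1 if t² − 4d is a quadratic residue;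
ℓ² − 1 if t² − 4d is a quadratic non-residue. -/
theorem stmt_10 (ℓ : ℕ) (hℓ : ℓ.Prime) (hℓodd : ℓ ≠ 2)
    (d : (ZMod (ℓ ^ 2))ˣ) (t : ZMod (ℓ ^ 2)) :
    (t ^ 2 - 4 * (d : ZMod (ℓ ^ 2)) = 0 →
      Nat.card {a : ZMod (ℓ ^ 2) // a ≠ 0 ∧
        IsUnit (a ^ 2 - a * t + (d : ZMod (ℓ ^ 2)))} = ℓ ^ 2 - ℓ - 1) ∧
    ((t ^ 2 - 4 * (d : ZMod (ℓ ^ 2)) ≠ 0 ∧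
        (ℓ : ZMod (ℓ ^ 2)) ∣ t ^ 2 - 4 * (d : ZMod (ℓ ^ 2))) →
      Nat.card {a : ZMod (ℓ ^ 2) // a ≠ 0 ∧
        IsUnit (a ^ 2 - a * t + (d : ZMod (ℓ ^ 2)))} = ℓ ^ 2 - ℓ - 1) ∧
    ((∃ u : (ZMod (ℓ ^ 2))ˣ, t ^ 2 - 4 * (d : ZMod (ℓ ^ 2)) = (u : ZMod (ℓ ^ 2)) ^ 2) →
      Nat.card {a : ZMod (ℓ ^ 2) // a ≠ 0 ∧
        IsUnit (a ^ 2 - a * t + (d : ZMod (ℓ ^ 2)))} = ℓ ^ 2 - 2 * ℓ - 1) ∧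
    ((IsUnit (t ^ 2 - 4 * (d : ZMod (ℓ ^ 2))) ∧
        ¬∃ u : (ZMod (ℓ ^ 2))ˣ, t ^ 2 - 4 * (d : ZMod (ℓ ^ 2)) = (u : ZMod (ℓ ^ 2)) ^ 2) →
      Nat.card {a : ZMod (ℓ ^ 2) // a ≠ 0 ∧
        IsUnit (a ^ 2 - a * t + (d : ZMod (ℓ ^ 2)))} = ℓ ^ 2 - 1) := by
  haveI : Fact ℓ.Prime := ⟨hℓ⟩
  have hφD : (phi ℓ t) ^ 2 - 4 * phi ℓ (d : ZMod (ℓ ^ 2))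
      = phi ℓ (t ^ 2 - 4 * (d : ZMod (ℓ ^ 2))) := by
    rw [map_sub, map_pow, map_mul]
    congr 1
    rw [map_ofNat]
  have hmain : Nat.card {a : ZMod (ℓ ^ 2) // a ≠ 0 ∧
        IsUnit (a ^ 2 - a * t + (d : ZMod (ℓ ^ 2)))}
      = ℓ ^ 2 - 1 - ℓ * #(univ.filter fun y : ZMod ℓ =>
          y ^ 2 = phi ℓ (t ^ 2 - 4 * (d : ZMod (ℓ ^ 2)))) := by
    rw [count_main d t, roots_card_eq_sqrts hℓodd, hφD]
  have harith : ∀ k r : ℕ, k - 1 - ℓ * r = k - r * ℓ - 1 := by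
    intro k r
    rw [Nat.sub_sub, Nat.sub_sub, Nat.add_comm, mul_comm]
  refine ⟨?_, ?_, ?_, ?_⟩
  · intro h0
    rw [hmain, h0, map_zero, sqrts_zero, harith, one_mul]
  · rintro ⟨hne, c, hc⟩
    rw [hmain, hc, map_mul, map_natCast, ZMod.natCast_self, zero_mul, sqrts_zero,
      harith, one_mul]
  · rintro ⟨u, hu⟩
    have hune : phi ℓ (u : ZMod (ℓ ^ 2)) ≠ 0 := (isUnit_iff_phi _).mp u.isUnit
    rw [hmain, hu, map_pow, sqrts_sq hℓodd _ hune, harith, mul_comm]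
  · rintro ⟨hunit, hnex⟩
    have hempty : (univ.filter fun y : ZMod ℓ =>
        y ^ 2 = phi ℓ (t ^ 2 - 4 * (d : ZMod (ℓ ^ 2)))) = ∅ := by
      rw [Finset.filter_eq_empty_iff]
      intro y _
      intro hy
      have hyne : y ≠ 0 := by
        intro h0
        rw [h0] at hy
        simp only [zero_pow, ne_eq, OfNat.ofNat_ne_zero, not_false_eq_true] at hy
        exact (isUnit_iff_phi _).mp hunit hy.symm
      exact hnex (hensel hℓodd _ y hyne hy)
    rw [hmain, hempty, Finset.card_empty, Nat.mul_zero, Nat.sub_zero]
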